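/- For any nonnegative multiindex ν, exponent p > 0, and parameters α, m > 0, one has ∫_{ℂⁿ} |z^ν|^p e^{-α|z|^{2m}} dz = (πⁿ/m) · (∏ⱼ Γ(νⱼp/2 + 1)) / Γ(n + |ν|p/2) · Γ((|ν|p + 2n)/(2m)) / α^{(|ν|p+2n)/(2m)}, where |ν| = ν₁+⋯+νₙ and dz is Lebesgue measure on ℂⁿ ≅ ℝ^{2n}. -/

import Mathlib

open MeasureTheory

/-- Euclidean norm on `ℂⁿ = Fin n → ℂ`. -/
noncomputable def eNorm {n : ℕ} (z : Fin n → ℂ) : ℝ :=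
  Real.sqrt (∑ j, ‖z j‖ ^ 2)

open Real Set Filter in
private lemma aux_integrableOn {p s b : ℝ} (hs : -1 < s) (hp : 0 < p) (hb : 0 < b) :
    IntegrableOn (fun x : ℝ => x ^ s * Real.exp (-b * x ^ p)) (Ioi 0) := by
  have hq : -1 < (s + 1 - p) / p := by
    rw [lt_div_iff₀ hp]; linarith
  have h0 : IntegrableOn (fun y : ℝ => y ^ ((s + 1 - p) / p) * Real.exp (-b * y)) (Ioi 0) := by
    have h := integrableOn_rpow_mul_exp_neg_mul_rpow (p := 1) (s := (s + 1 - p) / p) hq one_pos hb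
    refine h.congr_fun (fun x _ => by beta_reduce; rw [Real.rpow_one]) measurableSet_Ioi
  have h1 := (integrableOn_Ioi_comp_rpow_iff'
    (fun y => y ^ ((s + 1 - p) / p) * Real.exp (-b * y)) hp.ne').mpr h0
  refine h1.congr_fun (fun x hx => ?_) measurableSet_Ioi
  have hx0 : (0 : ℝ) < x := hx
  beta_reduce
  rw [smul_eq_mul, ← Real.rpow_mul hx0.le, mul_div_cancel₀ _ hp.ne', ← mul_assoc,
    ← Real.rpow_add hx0]
  ring_nf

private lemma eNorm_nonneg {n : ℕ} (z : Fin n → ℂ) : 0 ≤ eNorm z := Real.sqrt_nonneg _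

open Real in
private lemma continuous_eNorm (n : ℕ) : Continuous (eNorm (n := n)) :=
  Real.continuous_sqrt.comp <| continuous_finset_sum _ fun j _ =>
    (continuous_norm.comp (continuous_apply j)).pow 2

open Real in
private lemma eNorm_smul {n : ℕ} {t : ℝ} (ht : 0 ≤ t) (z : Fin n → ℂ) :
    eNorm (t • z) = t * eNorm z := by
  unfold eNorm
  have h : ∀ j, ‖(t • z) j‖ ^ 2 = t ^ 2 * ‖z j‖ ^ 2 := by
    intro j
    have : ‖(t • z) j‖ = |t| * ‖z j‖ := by
      show ‖t • z j‖ = _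
      rw [norm_smul, Real.norm_eq_abs]
    rw [this, mul_pow, sq_abs]
  simp_rw [h, ← Finset.mul_sum]
  rw [Real.sqrt_mul (sq_nonneg t), Real.sqrt_sq_eq_abs, abs_of_nonneg ht]

private lemma norm_le_eNorm {n : ℕ} (z : Fin n → ℂ) : ‖z‖ ≤ eNorm z := by
  rw [pi_norm_le_iff_of_nonneg (eNorm_nonneg z)]
  intro i
  have h1 : ‖z i‖ = Real.sqrt (‖z i‖ ^ 2) :=
    (Real.sqrt_sq (norm_nonneg _)).symm
  rw [h1]
  exact Real.sqrt_le_sqrt (Finset.single_le_sum (f := fun j => ‖z j‖ ^ 2)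
    (fun j _ => sq_nonneg _) (Finset.mem_univ i))

open Real Set Filter Topology in
private lemma radial_formula (n : ℕ) (hn : 0 < n) (ν : Fin n → ℕ) (p : ℝ) (hp : 0 < p)
    {β c : ℝ} (hβ : 0 < β) (hc : 0 < c) :
    ∫ z : Fin n → ℂ, (∏ j, ‖z j‖ ^ ((ν j : ℝ) * p)) * Real.exp (-β * eNorm z ^ c)
      = (∫ z : Fin n → ℂ, Set.indicator {y : Fin n → ℂ | eNorm y < 1}
            (fun y => ∏ j, ‖y j‖ ^ ((ν j : ℝ) * p)) z)
        * (β ^ (-(((∑ j, (ν j : ℝ)) * p + 2 * n) / c))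
            * ((((∑ j, (ν j : ℝ)) * p + 2 * n)) / c)
            * Real.Gamma ((((∑ j, (ν j : ℝ)) * p + 2 * n)) / c)) := by
  set G : (Fin n → ℂ) → ℝ := fun z => ∏ j, ‖z j‖ ^ ((ν j : ℝ) * p) with hG
  set D : ℝ := (∑ j, (ν j : ℝ)) * p with hD
  set E : ℝ := D + 2 * n with hEdef
  have hn' : (0 : ℝ) < n := by exact_mod_cast hn
  have hD0 : 0 ≤ D := mul_nonneg (Finset.sum_nonneg fun j _ => Nat.cast_nonneg _) hp.le
  have hE0 : 0 < E := by simp only [hEdef]; linarith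
  have hGnn : ∀ z, 0 ≤ G z := fun z =>
    Finset.prod_nonneg fun j _ => Real.rpow_nonneg (norm_nonneg _) _
  have hGc : Continuous G := continuous_finset_prod _ fun j _ =>
    (continuous_norm.comp (continuous_apply j)).rpow_const
      fun z => Or.inr (by positivity)
  have hrc : Continuous (eNorm (n := n)) := continuous_eNorm n
  have hGsmul : ∀ t : ℝ, 0 < t → ∀ z, G (t • z) = t ^ D * G z := by
    intro t ht z
    simp only [hG]
    have habs : ∀ j, ‖(t • z) j‖ = t * ‖z j‖ := by
      intro j
      show ‖t • z j‖ = _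
      rw [norm_smul, Real.norm_eq_abs,
        abs_of_nonneg ht.le]
    calc ∏ j, ‖(t • z) j‖ ^ ((ν j : ℝ) * p)
        = ∏ j, t ^ ((ν j : ℝ) * p) * ‖z j‖ ^ ((ν j : ℝ) * p) := by
          refine Finset.prod_congr rfl fun j _ => ?_
          rw [habs j, Real.mul_rpow ht.le (norm_nonneg _)]
      _ = (∏ j, t ^ ((ν j : ℝ) * p)) * ∏ j, ‖z j‖ ^ ((ν j : ℝ) * p) :=
          Finset.prod_mul_distrib
      _ = t ^ D * ∏ j, ‖z j‖ ^ ((ν j : ℝ) * p) := by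
          rw [← Real.rpow_sum_of_pos ht, hD, ← Finset.sum_mul]
  have hSm : ∀ t : ℝ, MeasurableSet {y : Fin n → ℂ | eNorm y < t} := fun t =>
    measurableSet_lt hrc.measurable measurable_const
  -- the truncated integral
  set V : ℝ → ℝ := fun t => ∫ z : Fin n → ℂ, Set.indicator {y | eNorm y < t} G z with hV
  have hVint : ∀ t : ℝ, Integrable (Set.indicator {y : Fin n → ℂ | eNorm y < t} G) := by
    intro t
    rw [integrable_indicator_iff (hSm t)]
    have hcpt : IsCompact (Metric.closedBall (0 : Fin n → ℂ) t) := isCompact_closedBall _ _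
    refine (hGc.continuousOn.integrableOn_compact hcpt).mono_set ?_
    intro z hz
    simp only [Set.mem_setOf_eq] at hz
    rw [Metric.mem_closedBall, dist_zero_right]
    exact (norm_le_eNorm z).trans hz.le
  have hVnn : ∀ t, 0 ≤ V t := fun t =>
    integral_nonneg fun z => Set.indicator_nonneg (fun y _ => hGnn y) z
  have hfr : Module.finrank ℝ (Fin n → ℂ) = 2 * n := by
    rw [Module.finrank_pi_fintype]
    simp [Complex.finrank_real_complex, Finset.sum_const, Finset.card_univ, mul_comm]
  have hscale : ∀ t : ℝ, 0 < t → V t = t ^ E * V 1 := by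
    intro t ht
    have h1 := MeasureTheory.Measure.integral_comp_smul_of_nonneg (volume)
      (f := Set.indicator {y : Fin n → ℂ | eNorm y < t} G) t (hR := ht.le)
    have hLHS : (fun z : Fin n → ℂ => Set.indicator {y | eNorm y < t} G (t • z))
        = fun z => Set.indicator {y : Fin n → ℂ | eNorm y < 1} (fun y => t ^ D * G y) z := by
      funext z
      by_cases hz : eNorm z < 1
      · have hmem : eNorm (t • z) < t := by
          rw [eNorm_smul ht.le]; exact (mul_lt_iff_lt_one_right ht).mpr hz
        simp only [Set.indicator_apply, Set.mem_setOf_eq]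
        rw [if_pos hmem, if_pos hz, hGsmul t ht z]
      · have hmem : ¬ eNorm (t • z) < t := by
          rw [eNorm_smul ht.le, mul_lt_iff_lt_one_right ht]; exact hz
        simp only [Set.indicator_apply, Set.mem_setOf_eq]
        rw [if_neg hmem, if_neg hz]
    rw [hLHS] at h1
    have h2 : ∫ z : Fin n → ℂ,
        Set.indicator {y : Fin n → ℂ | eNorm y < 1} (fun y => t ^ D * G y) z = t ^ D * V 1 := by
      simp_rw [Set.indicator_const_mul]
      exact integral_const_mul _ _
    rw [h2, smul_eq_mul, hfr] at h1
    have hne : (t : ℝ) ^ (2 * n : ℕ) ≠ 0 := pow_ne_zero _ ht.ne'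
    have h3 : t ^ (2 * n : ℕ) * (t ^ D * V 1) = V t := by
      rw [h1, ← mul_assoc, mul_inv_cancel₀ hne, one_mul]
    rw [← h3, ← Real.rpow_natCast t (2 * n), ← mul_assoc, ← Real.rpow_add ht]
    congr 2
    push_cast
    simp only [hEdef]
    ring
  -- the radial weight
  set w : ℝ → ℝ := fun t => β * c * (t ^ (c - 1) * Real.exp (-β * t ^ c)) with hw
  have hwint : IntegrableOn w (Ioi 0) := by
    exact (aux_integrableOn (by linarith) hc hβ).const_mul (β * c)
  have hwnn : ∀ t : ℝ, 0 < t → 0 ≤ w t := by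
    intro t ht
    have : (0:ℝ) ≤ t ^ (c - 1) := Real.rpow_nonneg ht.le _
    positivity
  have hFTC : ∀ r : ℝ, 0 ≤ r → ∫ t in Ioi r, w t = Real.exp (-β * r ^ c) := by
    intro r hr
    have hderiv : ∀ x ∈ Ioi r, HasDerivAt (fun t : ℝ => -Real.exp (-β * t ^ c)) (w x) x := by
      intro x hx
      have hx0 : 0 < x := lt_of_le_of_lt hr hx
      have h1 : HasDerivAt (fun t : ℝ => t ^ c) (c * x ^ (c - 1)) x :=
        Real.hasDerivAt_rpow_const (Or.inl hx0.ne')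
      have h2 : HasDerivAt (fun t : ℝ => -β * t ^ c) (-β * (c * x ^ (c - 1))) x :=
        h1.const_mul (-β)
      have h3 : HasDerivAt (fun t : ℝ => -Real.exp (-β * t ^ c))
          (-(Real.exp (-β * x ^ c) * (-β * (c * x ^ (c - 1))))) x := h2.exp.neg
      convert h3 using 1
      show β * c * (x ^ (c - 1) * Real.exp (-β * x ^ c)) = _
      ring
    have hcont : ContinuousWithinAt (fun t : ℝ => -Real.exp (-β * t ^ c)) (Ici r) r := by
      have : ContinuousAt (fun t : ℝ => -Real.exp (-β * t ^ c)) r := by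
        have h1 : ContinuousAt (fun t : ℝ => t ^ c) r :=
          Real.continuousAt_rpow_const r c (Or.inr hc.le)
        exact ((Real.continuous_exp.continuousAt.comp (continuousAt_const.mul h1))).neg
      exact this.continuousWithinAt
    have htends : Tendsto (fun t : ℝ => -Real.exp (-β * t ^ c)) atTop (𝓝 0) := by
      have hpos : Tendsto (fun t : ℝ => Real.exp (-β * t ^ c)) atTop (𝓝 0) := by
        refine Real.tendsto_exp_atBot.comp ?_
        have h1 : Tendsto (fun t : ℝ => t ^ c) atTop atTop := tendsto_rpow_atTop hc
        exact (tendsto_const_mul_atBot_of_neg (show -β < 0 by linarith)).mpr h1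
      simpa using hpos.neg
    have := integral_Ioi_of_hasDerivAt_of_tendsto hcont hderiv
      (hwint.mono_set (Ioi_subset_Ioi hr)) htends
    rw [this]
    ring
  -- pass to ENNReal-valued integrals
  set Wl : ℝ → ENNReal := fun t => ∫⁻ z : Fin n → ℂ in {y | eNorm y < t}, ENNReal.ofReal (G z)
    with hWl
  have hWV : ∀ t : ℝ, Wl t = ENNReal.ofReal (V t) := by
    intro t
    show (∫⁻ z : Fin n → ℂ in {y | eNorm y < t}, ENNReal.ofReal (G z)) = ENNReal.ofReal (V t)
    rw [← lintegral_indicator (hSm t)]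
    rw [ofReal_integral_eq_lintegral_ofReal (hVint t)
      (ae_of_all _ fun z => Set.indicator_nonneg (fun y _ => hGnn y) z)]
    refine lintegral_congr fun z => ?_
    by_cases hz : z ∈ {y : Fin n → ℂ | eNorm y < t}
    · simp [hz]
    · simp [hz]
  set L : ENNReal := ∫⁻ z : Fin n → ℂ, ENNReal.ofReal (G z * Real.exp (-β * eNorm z ^ c))
    with hL
  have hstep1 : L = ∫⁻ z : Fin n → ℂ, ∫⁻ t in Ioi (0 : ℝ),
      ENNReal.ofReal (G z) * (Ioi (eNorm z)).indicator (fun t => ENNReal.ofReal (w t)) t := by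
    rw [hL]
    refine lintegral_congr fun z => ?_
    rw [lintegral_const_mul' _ _ ENNReal.ofReal_ne_top]
    rw [ENNReal.ofReal_mul (hGnn z)]
    congr 1
    have hsub : Ioi (eNorm z) ⊆ Ioi (0 : ℝ) := Ioi_subset_Ioi (eNorm_nonneg z)
    rw [lintegral_indicator measurableSet_Ioi, Measure.restrict_restrict measurableSet_Ioi,
      Set.inter_eq_self_of_subset_left hsub]
    rw [← ofReal_integral_eq_lintegral_ofReal (hwint.mono_set hsub)
      ((ae_restrict_iff' measurableSet_Ioi).mpr
        (ae_of_all _ fun t ht => hwnn t (lt_of_le_of_lt (eNorm_nonneg z) ht)))]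
    rw [hFTC _ (eNorm_nonneg z)]
  have hmw : Measurable w := by
    apply Measurable.const_mul
    exact (measurable_id'.pow_const _).mul
      (Real.measurable_exp.comp ((measurable_id'.pow_const c).const_mul (-β)))
  have hswapmeas : AEMeasurable (Function.uncurry fun (z : Fin n → ℂ) (t : ℝ) =>
      ENNReal.ofReal (G z) * (Ioi (eNorm z)).indicator (fun t => ENNReal.ofReal (w t)) t)
      (volume.prod (volume.restrict (Ioi (0:ℝ)))) := by
    have heq : (Function.uncurry fun (z : Fin n → ℂ) (t : ℝ) =>
        ENNReal.ofReal (G z) * (Ioi (eNorm z)).indicator (fun t => ENNReal.ofReal (w t)) t)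
        = fun q : (Fin n → ℂ) × ℝ => ENNReal.ofReal (G q.1) *
          (if eNorm q.1 < q.2 then ENNReal.ofReal (w q.2) else 0) := by
      funext q
      simp [Function.uncurry, Set.indicator_apply, Set.mem_Ioi]
    rw [heq]
    have hset : MeasurableSet {q : (Fin n → ℂ) × ℝ | eNorm q.1 < q.2} :=
      measurableSet_lt ((hrc.measurable).comp measurable_fst) measurable_snd
    refine Measurable.aemeasurable ?_
    exact (ENNReal.measurable_ofReal.comp (hGc.measurable.comp measurable_fst)).mul
      (Measurable.ite hset (ENNReal.measurable_ofReal.comp (hmw.comp measurable_snd))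
        measurable_const)
  have hstep2 : L = ∫⁻ t in Ioi (0 : ℝ), ∫⁻ z : Fin n → ℂ,
      ENNReal.ofReal (G z) * (Ioi (eNorm z)).indicator (fun t => ENNReal.ofReal (w t)) t := by
    rw [hstep1]
    exact lintegral_lintegral_swap hswapmeas
  have hstep3 : ∀ t : ℝ, ∫⁻ z : Fin n → ℂ,
      ENNReal.ofReal (G z) * (Ioi (eNorm z)).indicator (fun s => ENNReal.ofReal (w s)) t
      = ENNReal.ofReal (w t) * Wl t := by
    intro t
    have heq : ∀ z : Fin n → ℂ,
        ENNReal.ofReal (G z) * (Ioi (eNorm z)).indicator (fun s => ENNReal.ofReal (w s)) t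
        = Set.indicator {y : Fin n → ℂ | eNorm y < t}
            (fun z => ENNReal.ofReal (G z) * ENNReal.ofReal (w t)) z := by
      intro z
      simp [Set.indicator_apply, Set.mem_Ioi, Set.mem_setOf_eq, mul_ite, mul_zero]
    simp_rw [heq]
    rw [lintegral_indicator (hSm t)]
    rw [lintegral_mul_const' _ _ ENNReal.ofReal_ne_top]
    rw [mul_comm]
  have hstep4 : L = ENNReal.ofReal (V 1) * ∫⁻ t in Ioi (0 : ℝ),
      ENNReal.ofReal (w t * t ^ E) := by
    rw [hstep2]
    rw [← lintegral_const_mul' _ _ ENNReal.ofReal_ne_top]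
    refine setLIntegral_congr_fun measurableSet_Ioi (fun t ht => ?_)
    rw [hstep3 t, hWV t, hscale t ht]
    rw [ENNReal.ofReal_mul (hwnn t ht), ENNReal.ofReal_mul (Real.rpow_nonneg ht.le _)]
    ring
  have hInt2 : IntegrableOn (fun t : ℝ => w t * t ^ E) (Ioi 0) := by
    have base : IntegrableOn (fun t : ℝ => t ^ (c - 1 + E) * Real.exp (-β * t ^ c)) (Ioi 0) :=
      aux_integrableOn (by linarith) hc hβ
    have base2 : IntegrableOn
        (fun t : ℝ => β * c * (t ^ (c - 1 + E) * Real.exp (-β * t ^ c))) (Ioi 0) :=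
      base.const_mul (β * c)
    refine base2.congr_fun (fun t ht => ?_) measurableSet_Ioi
    have ht0 : (0:ℝ) < t := ht
    simp only [hw, hEdef]
    rw [show c - 1 + (D + 2 * (n:ℝ)) = c - 1 + D + 2 * (n:ℝ) from by ring,
      Real.rpow_add ht0 (c - 1 + D), Real.rpow_add ht0 (c - 1) D,
      Real.rpow_add ht0 D (2 * (n:ℝ))]
    ring
  have hval : ∫ t in Ioi (0:ℝ), w t * t ^ E
      = β ^ (-(E / c)) * (E / c) * Real.Gamma (E / c) := by
    have heq : ∀ t ∈ Ioi (0:ℝ), w t * t ^ E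
        = β * c * (t ^ (c - 1 + E) * Real.exp (-β * t ^ c)) := by
      intro t ht
      have ht0 : (0:ℝ) < t := ht
      simp only [hw, hEdef]
      rw [show c - 1 + (D + 2 * (n:ℝ)) = c - 1 + D + 2 * (n:ℝ) from by ring,
        Real.rpow_add ht0 (c - 1 + D), Real.rpow_add ht0 (c - 1) D,
        Real.rpow_add ht0 D (2 * (n:ℝ))]
      ring
    rw [setIntegral_congr_fun measurableSet_Ioi heq]
    rw [integral_const_mul]
    rw [integral_rpow_mul_exp_neg_mul_rpow hc (by linarith) hβ]
    have h1 : (c - 1 + E + 1) / c = E / c + 1 := by field_simp; ring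
    have h2 : -(c - 1 + E + 1) / c = -(E / c) + (-1) := by field_simp; ring
    rw [h1, h2, Real.Gamma_add_one (ne_of_gt (div_pos hE0 hc)),
      Real.rpow_add hβ, Real.rpow_neg_one]
    field_simp
  have hwEnn : ∀ᵐ t ∂(volume.restrict (Ioi (0:ℝ))), 0 ≤ w t * t ^ E := by
    refine (ae_restrict_iff' measurableSet_Ioi).mpr (ae_of_all _ fun t ht => ?_)
    have ht0 : (0:ℝ) < t := ht
    exact mul_nonneg (hwnn t ht0) (Real.rpow_nonneg ht0.le _)
  have hstep5 : L = ENNReal.ofReal (V 1) *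
      ENNReal.ofReal (β ^ (-(E / c)) * (E / c) * Real.Gamma (E / c)) := by
    rw [hstep4, ← ofReal_integral_eq_lintegral_ofReal hInt2 hwEnn, hval]
  -- conclude for the Bochner integral
  have hKnn : 0 ≤ β ^ (-(E / c)) * (E / c) * Real.Gamma (E / c) := by
    have := Real.Gamma_pos_of_pos (div_pos hE0 hc)
    positivity
  have hFc : Continuous (fun z : Fin n → ℂ => G z * Real.exp (-β * eNorm z ^ c)) := by
    refine hGc.mul ?_
    refine Real.continuous_exp.comp ?_
    exact continuous_const.mul (hrc.rpow_const fun z => Or.inr hc.le)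
  have hFnn : ∀ z : Fin n → ℂ, 0 ≤ G z * Real.exp (-β * eNorm z ^ c) := fun z =>
    mul_nonneg (hGnn z) (Real.exp_nonneg _)
  have hBochner : ∫ z : Fin n → ℂ, G z * Real.exp (-β * eNorm z ^ c) = L.toReal := by
    exact integral_eq_lintegral_of_nonneg_ae (ae_of_all _ hFnn) hFc.aestronglyMeasurable
  rw [hBochner, hstep5, ← ENNReal.ofReal_mul (hVnn 1), ENNReal.toReal_ofReal
    (mul_nonneg (hVnn 1) hKnn)]

open Real Set in
private lemma prod_formula (n : ℕ) (ν : Fin n → ℕ) (p : ℝ) (hp : 0 < p) :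
    ∫ z : Fin n → ℂ, (∏ j, ‖z j‖ ^ ((ν j : ℝ) * p)) * Real.exp (-1 * eNorm z ^ (2:ℝ))
      = π ^ n * ∏ j, Real.Gamma ((ν j : ℝ) * p / 2 + 1) := by
  have h1 : ∀ z : Fin n → ℂ,
      (∏ j, ‖z j‖ ^ ((ν j : ℝ) * p)) * Real.exp (-1 * eNorm z ^ (2:ℝ))
      = ∏ j, (‖z j‖ ^ ((ν j : ℝ) * p)
          * Real.exp (-(‖z j‖ ^ (2:ℝ)))) := by
    intro z
    rw [Finset.prod_mul_distrib]
    congr 1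
    rw [← Real.exp_sum]
    congr 1
    have hS : (0:ℝ) ≤ ∑ j, ‖z j‖ ^ 2 :=
      Finset.sum_nonneg fun j _ => sq_nonneg _
    have h2 : eNorm z ^ (2:ℝ) = ∑ j, ‖z j‖ ^ 2 := by
      rw [show (2:ℝ) = ((2:ℕ):ℝ) by norm_num, Real.rpow_natCast]
      exact Real.sq_sqrt hS
    rw [h2, neg_one_mul, ← Finset.sum_neg_distrib]
    refine Finset.sum_congr rfl fun j _ => ?_
    rw [show ((2:ℝ)) = ((2:ℕ):ℝ) by norm_num, Real.rpow_natCast]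
  simp_rw [h1]
  rw [MeasureTheory.integral_fintype_prod_volume_eq_prod (ι := Fin n)
    (f := fun j (x : ℂ) => ‖x‖ ^ ((ν j : ℝ) * p)
      * Real.exp (-(‖x‖ ^ (2:ℝ))))]
  have heach : ∀ j, (∫ x : ℂ,
      ‖x‖ ^ ((ν j : ℝ) * p) * Real.exp (-(‖x‖ ^ (2:ℝ))))
      = π * Real.Gamma ((ν j : ℝ) * p / 2 + 1) := by
    intro j
    have hq : (-2:ℝ) < (ν j : ℝ) * p :=
      lt_of_lt_of_le (by norm_num) (mul_nonneg (Nat.cast_nonneg _) hp.le)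
    have h := Complex.integral_rpow_mul_exp_neg_rpow (p := 2) (q := (ν j : ℝ) * p) one_le_two hq
    rw [h, show ((ν j : ℝ) * p + 2) / 2 = (ν j : ℝ) * p / 2 + 1 by ring]
    ring
  rw [Finset.prod_congr rfl fun j _ => heach j, Finset.prod_mul_distrib, Finset.prod_const,
    Finset.card_univ, Fintype.card_fin]

open Real Set in
/-- For a multiindex `ν`, `p > 0` and `α, m > 0`,
`∫_{ℂⁿ} |z^ν|^p e^{-α|z|^{2m}} dz
  = (πⁿ/m) · ∏ⱼ Γ(νⱼ p/2 + 1) / Γ(n + |ν| p/2) · Γ((|ν| p + 2n)/(2m)) / α^{(|ν| p + 2n)/(2m)}`. -/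
theorem stmt1 (n : ℕ) (hn : 0 < n) (ν : Fin n → ℕ) (p α m : ℝ)
    (hp : 0 < p) (hα : 0 < α) (hm : 0 < m) :
    (∫ z : Fin n → ℂ,
        ‖∏ j, z j ^ ν j‖ ^ p * Real.exp (-α * eNorm z ^ (2 * m)))
    = (Real.pi ^ n / m) *
        ((∏ j, Real.Gamma ((ν j : ℝ) * p / 2 + 1)) /
          Real.Gamma ((n : ℝ) + (∑ j, (ν j : ℝ)) * p / 2)) *
        (Real.Gamma (((∑ j, (ν j : ℝ)) * p + 2 * n) / (2 * m)) /
          α ^ (((∑ j, (ν j : ℝ)) * p + 2 * n) / (2 * m))) := by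
  have hn' : (0:ℝ) < n := by exact_mod_cast hn
  have hS0 : (0:ℝ) ≤ ∑ j, (ν j : ℝ) := Finset.sum_nonneg fun j _ => Nat.cast_nonneg _
  have hGeq : ∀ z : Fin n → ℂ, ‖∏ j, z j ^ ν j‖ ^ p
      = ∏ j, ‖z j‖ ^ ((ν j : ℝ) * p) := by
    intro z
    rw [norm_prod]
    rw [← Real.finset_prod_rpow _ _ (fun j _ => norm_nonneg _) p]
    refine Finset.prod_congr rfl fun j _ => ?_
    rw [norm_pow, ← Real.rpow_natCast (‖z j‖) (ν j),
      ← Real.rpow_mul (norm_nonneg _)]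
  simp_rw [hGeq]
  rw [radial_formula n hn ν p hp hα (by positivity : (0:ℝ) < 2 * m)]
  have h2 := radial_formula n hn ν p hp one_pos two_pos
  rw [prod_formula n ν p hp, Real.one_rpow, one_mul] at h2
  set V1 : ℝ := ∫ z : Fin n → ℂ, Set.indicator {y : Fin n → ℂ | eNorm y < 1}
      (fun y => ∏ j, ‖y j‖ ^ ((ν j : ℝ) * p)) z with hV1def
  set E : ℝ := (∑ j, (ν j : ℝ)) * p + 2 * (n:ℝ) with hEdef
  have hE0 : 0 < E := by
    rw [hEdef]
    nlinarith [mul_nonneg hS0 hp.le]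
  rw [show (n:ℝ) + (∑ j, (ν j : ℝ)) * p / 2 = E / 2 from by rw [hEdef]; ring]
  have hΓ2 : 0 < Real.Gamma (E / 2) := Real.Gamma_pos_of_pos (by positivity)
  have hΓm : 0 < Real.Gamma (E / (2 * m)) :=
    Real.Gamma_pos_of_pos (div_pos hE0 (by positivity))
  have hαpow : 0 < α ^ (E / (2 * m)) := Real.rpow_pos_of_pos hα _
  have hV1 : V1 = π ^ n * (∏ j, Real.Gamma ((ν j : ℝ) * p / 2 + 1))
      / ((E / 2) * Real.Gamma (E / 2)) := by
    rw [eq_div_iff (by positivity)]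
    linarith [h2]
  rw [hV1, Real.rpow_neg hα.le]
  field_simp
  ring_nf
  exact Finset.prod_congr rfl fun x _ => by ring_nf
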